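/- Let g be the free Lie algebra over a field F of characteristic zero on a nonempty set E. Then g acts faithfully on the class of finite-dimensional g-modules on which every generator e ∈ E acts nilpotently and only finitely many generators act nonzero. Concretely: for every nonzero x in U(g) there exist N ∈ ℕ and a finite subset J ⊆ E such that x acts nonzero on the module V_N(J) with basis {b_w : w a word in J of length ≤ N}, where a word u acts by u·b_w = b_{uw} if supp(u) ⊆ J and l(u)+l(w) ≤ N, and by 0 otherwise. -/

import Mathlib

/-- A word is admissible for the module `V_N(J)`: its length is at most `N` and its
support is contained in `J`. -/
def GoodWord {E : Type*} (N : ℕ) (J : Finset E) (w : FreeMonoid E) : Prop :=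
  w.length ≤ N ∧ ∀ a ∈ FreeMonoid.toList w, a ∈ J

/-- The module `V_N(J)` with basis `{b_w : w a word in J of length ≤ N}`. -/
abbrev VNJ (F : Type*) [Field F] (E : Type*) (N : ℕ) (J : Finset E) :=
  {w : FreeMonoid E // GoodWord N J w} →₀ F

/-- the free Lie algebra on `E` acts faithfully on the finite-dimensional
integrable modules with finite support.  Identifying `U(g)` with the monoid algebra
`F[W]` of the free monoid of words, every nonzero `x ∈ U(g)` acts nonzero on some
module `V_N(J)`, where a word `u` acts by `u · b_w = b_{uw}` if `supp u ⊆ J` and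
`l(u) + l(w) ≤ N`, and by `0` otherwise; indeed `x · b_∅ ≠ 0`. -/
theorem stmt5 {F : Type*} [Field F] [CharZero F] {E : Type*} [DecidableEq E]
    (x : MonoidAlgebra F (FreeMonoid E)) (hx : x ≠ 0) :
    ∃ (N : ℕ) (J : Finset E),
      ∀ ρ : MonoidAlgebra F (FreeMonoid E) →ₐ[F] Module.End F (VNJ F E N J),
        (∀ (u : FreeMonoid E) (b : {w : FreeMonoid E // GoodWord N J w}),
          ρ (MonoidAlgebra.single u 1) (Finsupp.single b 1) =
            if h : u.length + (b : FreeMonoid E).length ≤ N ∧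
                ∀ a ∈ FreeMonoid.toList u, a ∈ J then
              Finsupp.single
                ⟨u * (b : FreeMonoid E),
                  ⟨by simpa [FreeMonoid.length_mul] using h.1, by
                    intro a ha
                    rcases List.mem_append.mp (by simpa [FreeMonoid.toList_mul] using ha) with
                      h' | h'
                    · exact h.2 a h'
                    · exact b.2.2 a h'⟩⟩ (1 : F)
            else 0) →
        ρ x (Finsupp.single ⟨1, by constructor <;> simp⟩ 1) ≠ 0 := by
  classical
  refine ⟨x.coeff.support.sup (fun u => u.length),
    x.coeff.support.biUnion (fun u => (FreeMonoid.toList u).toFinset), ?_⟩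
  set N := x.coeff.support.sup (fun u => u.length) with hN
  set J := x.coeff.support.biUnion (fun u => (FreeMonoid.toList u).toFinset) with hJ
  intro ρ hρ
  have hgood : ∀ u ∈ x.coeff.support, GoodWord N J u := by
    intro u hu
    refine ⟨Finset.le_sup hu, fun a ha => ?_⟩
    exact Finset.mem_biUnion.mpr ⟨u, hu, List.mem_toFinset.mpr ha⟩
  obtain ⟨u0, hu0⟩ := Finsupp.support_nonempty_iff.mpr (mt MonoidAlgebra.coeff_eq_zero.mp hx)
  have key : ρ x (Finsupp.single ⟨1, by constructor <;> simp⟩ 1) =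
      ∑ u ∈ x.coeff.support, x.coeff u • ρ (MonoidAlgebra.single u 1)
        (Finsupp.single ⟨1, by constructor <;> simp⟩ 1) := by
    conv_lhs => rw [← MonoidAlgebra.sum_coeff_single x]
    rw [Finsupp.sum, map_sum]
    simp only [LinearMap.coe_sum, Finset.sum_apply]
    refine Finset.sum_congr rfl fun u hu => ?_
    have : (MonoidAlgebra.single u (x.coeff u) : MonoidAlgebra F (FreeMonoid E))
        = x.coeff u • MonoidAlgebra.single u 1 := by
      rw [MonoidAlgebra.smul_single', mul_one]
    rw [this, map_smul]
    rfl
  intro hzero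
  have hcoord := congrArg (fun f => f ⟨u0, hgood u0 hu0⟩) hzero
  simp only [key] at hcoord
  rw [Finsupp.finset_sum_apply] at hcoord
  have heval : ∀ u ∈ x.coeff.support,
      (x.coeff u • ρ (MonoidAlgebra.single u 1)
        (Finsupp.single ⟨1, by constructor <;> simp⟩ 1)) ⟨u0, hgood u0 hu0⟩
      = if u = u0 then x.coeff u else 0 := by
    intro u hu
    rw [hρ u ⟨1, by constructor <;> simp⟩]
    rw [dif_pos (by
      constructor
      · simpa using (hgood u hu).1
      · exact (hgood u hu).2)]
    simp only [Finsupp.smul_apply, Finsupp.single_apply, Subtype.mk.injEq, mul_one,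
      smul_eq_mul]
    by_cases h : u = u0 <;> simp [h, mul_one]
  rw [Finset.sum_congr rfl heval] at hcoord
  rw [Finset.sum_ite_eq' x.coeff.support u0 (fun u => x.coeff u)] at hcoord
  rw [if_pos hu0] at hcoord
  simp only [Finsupp.coe_zero, Pi.zero_apply] at hcoord
  exact Finsupp.mem_support_iff.mp hu0 hcoord
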